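/- Let C > 0, σ > 0, and ω > 1, and let (μ_j)_{j≥1} be a sequence of nonnegative real numbers with μ_j ≤ C·j^{-ω} for all j ≥ 1. For each integer n ≥ 1, define the effective dimension d*(n) = min{ J ∈ ℕ, J ≥ 1 : J / Σ_{i=J+1}^∞ μ_i ≥ n/σ² } (with the convention that the condition holds when the tail sum is zero). Then d*(n) is well defined (the minimizing set is nonempty), and there exists a constant C'' > 0, depending only on C, σ, and ω, such that d*(n) ≤ C''·n^{1/ω} for all n ≥ 1. -/

import Mathlib

open Set

lemma tail_sum_bound (C ω : ℝ) (hC : 0 < C) (hω : 1 < ω)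
    (μ : ℕ → ℝ) (hμ0 : ∀ j, 1 ≤ j → 0 ≤ μ j)
    (hμ : ∀ j : ℕ, 1 ≤ j → μ j ≤ C * (j : ℝ) ^ (-ω)) (J : ℕ) (hJ : 1 ≤ J) :
    ∑' i : ℕ, μ (J + 1 + i) ≤ C * (J : ℝ) ^ (1 - ω) / (ω - 1) := by
  have hJpos : (0:ℝ) < J := by exact_mod_cast hJ
  apply Real.tsum_le_of_sum_range_le (fun i => hμ0 (J + 1 + i) (by omega))
  intro a
  have hanti : AntitoneOn (fun x : ℝ => x ^ (-ω)) (Icc (J:ℝ) ((J:ℝ) + a)) := by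
    intro x hx y hy hxy
    exact Real.rpow_le_rpow_of_nonpos (lt_of_lt_of_le hJpos hx.1) hxy (by linarith)
  have hsum := hanti.sum_le_integral
  have hint : ∫ x in (J:ℝ)..((J:ℝ)+a), x ^ (-ω) =
      (((J:ℝ)+a) ^ (-ω+1) - (J:ℝ) ^ (-ω+1)) / (-ω+1) := by
    rw [integral_rpow]
    right
    constructor
    · intro h; linarith
    · intro h
      rw [Set.mem_uIcc] at h
      rcases h with ⟨h1, _⟩ | ⟨h1, _⟩ <;> push_cast at * <;> linarith [Nat.cast_nonneg (α := ℝ) a]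
  calc ∑ i ∈ Finset.range a, μ (J + 1 + i)
      ≤ ∑ i ∈ Finset.range a, C * ((J:ℝ) + (i+1:ℕ)) ^ (-ω) := by
        apply Finset.sum_le_sum
        intro i _
        have := hμ (J + 1 + i) (by omega)
        convert this using 3
        · rfl
        push_cast; ring
    _ = C * ∑ i ∈ Finset.range a, ((J:ℝ) + (i+1:ℕ)) ^ (-ω) := by rw [Finset.mul_sum]
    _ ≤ C * ∫ x in (J:ℝ)..((J:ℝ)+a), x ^ (-ω) := by
        apply mul_le_mul_of_nonneg_left hsum hC.le
    _ ≤ C * (J : ℝ) ^ (1 - ω) / (ω - 1) := by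
        rw [hint]
        have h1 : (0:ℝ) ≤ ((J:ℝ)+a) ^ (-ω+1) := Real.rpow_nonneg (by positivity) _
        have h2 : (((J:ℝ)+a) ^ (-ω+1) - (J:ℝ) ^ (-ω+1)) / (-ω+1)
            ≤ (J:ℝ) ^ (1-ω) / (ω - 1) := by
          have he : (-ω+1 : ℝ) = 1-ω := by ring
          rw [he]
          have heq : (((J:ℝ)+a) ^ (1-ω) - (J:ℝ) ^ (1-ω)) / (1-ω)
              = ((J:ℝ) ^ (1-ω) - ((J:ℝ)+a) ^ (1-ω)) / (ω-1) := by
            rw [div_eq_div_iff (by linarith) (by linarith)]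
            ring
          rw [heq]
          apply div_le_div_of_nonneg_right ?_ (by linarith)
          · linarith [he ▸ h1]
        calc C * ((((J:ℝ)+a) ^ (-ω+1) - (J:ℝ) ^ (-ω+1)) / (-ω+1))
            ≤ C * ((J:ℝ) ^ (1-ω) / (ω - 1)) := mul_le_mul_of_nonneg_left h2 hC.le
          _ = C * (J : ℝ) ^ (1 - ω) / (ω - 1) := by ring


/-- The effective dimension of a nonnegative eigenvalue sequence at level `n/σ²`:
`d*(n) = min { J ≥ 1 : J / Σ_{i=J+1}^∞ μ_i ≥ n/σ² }`, with the convention that the condition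
holds when the tail sum is zero. -/
noncomputable def effectiveDim (μ : ℕ → ℝ) (σ : ℝ) (n : ℕ) : ℕ :=
  sInf { J : ℕ | 1 ≤ J ∧
    ((∑' i : ℕ, μ (J + 1 + i)) = 0 ∨
      (n : ℝ) / σ ^ 2 ≤ (J : ℝ) / ∑' i : ℕ, μ (J + 1 + i)) }

lemma mem_aux (C σ ω : ℝ) (hC : 0 < C) (hσ : 0 < σ) (hω : 1 < ω)
    (μ : ℕ → ℝ) (hμ0 : ∀ j, 1 ≤ j → 0 ≤ μ j)
    (hμ : ∀ j : ℕ, 1 ≤ j → μ j ≤ C * (j : ℝ) ^ (-ω)) (n : ℕ) (hn : 1 ≤ n) :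
    max 1 ⌈(C * n / ((ω - 1) * σ ^ 2)) ^ (1/ω)⌉₊ ∈
      { J : ℕ | 1 ≤ J ∧
        ((∑' i : ℕ, μ (J + 1 + i)) = 0 ∨
          (n : ℝ) / σ ^ 2 ≤ (J : ℝ) / ∑' i : ℕ, μ (J + 1 + i)) } := by
  set a : ℝ := C * n / ((ω - 1) * σ ^ 2) with ha_def
  have hnpos : (0:ℝ) < n := by exact_mod_cast hn
  have ha : 0 < a := div_pos (by positivity)
    (mul_pos (by linarith : (0:ℝ) < ω - 1) (by positivity))
  set J : ℕ := max 1 ⌈a ^ (1/ω)⌉₊ with hJ_def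
  have hJ1 : 1 ≤ J := le_max_left _ _
  have hJpos : (0:ℝ) < J := by exact_mod_cast hJ1
  refine ⟨hJ1, ?_⟩
  set T : ℝ := ∑' i : ℕ, μ (J + 1 + i) with hT_def
  rcases eq_or_lt_of_le (show (0:ℝ) ≤ T from
    tsum_nonneg fun i => hμ0 _ (by omega)) with hT0 | hTpos
  · exact Or.inl hT0.symm
  right
  have hbound : T ≤ C * (J : ℝ) ^ (1 - ω) / (ω - 1) :=
    tail_sum_bound C ω hC hω μ hμ0 hμ J hJ1
  -- key: a ≤ J^ω
  have hkey : a ≤ (J:ℝ) ^ ω := by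
    have h1 : a ^ (1/ω) ≤ (J:ℝ) := by
      calc a ^ (1/ω) ≤ (⌈a ^ (1/ω)⌉₊ : ℝ) := Nat.le_ceil _
        _ ≤ (J : ℝ) := by exact_mod_cast le_max_right _ _
    calc a = (a ^ (1/ω)) ^ ω := by
          rw [← Real.rpow_mul ha.le, one_div_mul_cancel (by linarith : ω ≠ 0), Real.rpow_one]
      _ ≤ (J:ℝ) ^ ω := Real.rpow_le_rpow (Real.rpow_nonneg ha.le _) h1 (by linarith)
  rw [div_le_div_iff₀ (by positivity) hTpos]
  calc (n:ℝ) * T ≤ n * (C * (J : ℝ) ^ (1 - ω) / (ω - 1)) :=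
        mul_le_mul_of_nonneg_left hbound hnpos.le
    _ = a * σ ^ 2 * (J:ℝ) ^ (1 - ω) := by
        have hs : a * σ ^ 2 = C * n / (ω - 1) := by
          have h1 : σ ^ 2 ≠ 0 := by positivity
          have h2 : ω - 1 ≠ 0 := by linarith
          rw [ha_def]; field_simp
        rw [hs]; ring
    _ ≤ (J:ℝ) ^ ω * σ ^ 2 * (J:ℝ) ^ (1 - ω) :=
        mul_le_mul_of_nonneg_right (mul_le_mul_of_nonneg_right hkey (by positivity))
          (Real.rpow_nonneg hJpos.le _)
    _ = (J:ℝ) * σ ^ 2 := by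
        rw [mul_right_comm, ← Real.rpow_add hJpos, show ω + (1-ω) = 1 from by ring,
          Real.rpow_one]

/-- If `0 ≤ μ_j ≤ C j^{-ω}` for all `j ≥ 1` with `ω > 1`, then the effective dimension
`d*(n)` is well defined (the minimizing set is nonempty) and there is a constant `C'' > 0`
(depending only on `C`, `σ`, `ω`) such that `d*(n) ≤ C'' n^{1/ω}` for all `n ≥ 1`. -/
theorem stmt_15 (C σ ω : ℝ) (hC : 0 < C) (hσ : 0 < σ) (hω : 1 < ω)
    (μ : ℕ → ℝ) (hμ0 : ∀ j, 1 ≤ j → 0 ≤ μ j)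
    (hμ : ∀ j : ℕ, 1 ≤ j → μ j ≤ C * (j : ℝ) ^ (-ω)) :
    (∀ n : ℕ, 1 ≤ n →
      { J : ℕ | 1 ≤ J ∧
        ((∑' i : ℕ, μ (J + 1 + i)) = 0 ∨
          (n : ℝ) / σ ^ 2 ≤ (J : ℝ) / ∑' i : ℕ, μ (J + 1 + i)) }.Nonempty) ∧
    ∃ C'' > 0, ∀ n : ℕ, 1 ≤ n →
      (effectiveDim μ σ n : ℝ) ≤ C'' * (n : ℝ) ^ (1 / ω) := by
  constructor
  · intro n hn
    exact ⟨_, mem_aux C σ ω hC hσ hω μ hμ0 hμ n hn⟩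
  · have hden : (0:ℝ) < (ω - 1) * σ ^ 2 :=
      mul_pos (by linarith) (by positivity)
    set c0 : ℝ := (C / ((ω - 1) * σ ^ 2)) ^ (1/ω) with hc0_def
    have hc0 : 0 ≤ c0 := Real.rpow_nonneg (le_of_lt (div_pos hC hden)) _
    refine ⟨2 + c0, by linarith, ?_⟩
    intro n hn
    have hmem := mem_aux C σ ω hC hσ hω μ hμ0 hμ n hn
    have hle : effectiveDim μ σ n ≤ max 1 ⌈(C * n / ((ω - 1) * σ ^ 2)) ^ (1/ω)⌉₊ :=
      Nat.sInf_le hmem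
    set b : ℝ := (C * n / ((ω - 1) * σ ^ 2)) ^ (1/ω) with hb_def
    have hb0 : 0 ≤ b := Real.rpow_nonneg (by positivity) _
    have hnr : (1:ℝ) ≤ (n:ℝ) ^ (1/ω) := by
      calc (1:ℝ) = (1:ℝ) ^ (1/ω) := (Real.one_rpow _).symm
        _ ≤ (n:ℝ) ^ (1/ω) :=
          Real.rpow_le_rpow zero_le_one (by exact_mod_cast hn) (by positivity)
    have hbsplit : b = c0 * (n:ℝ) ^ (1/ω) := by
      rw [hb_def, hc0_def, show C * n / ((ω - 1) * σ ^ 2) = (C / ((ω - 1) * σ ^ 2)) * n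
        from by ring, ← Real.mul_rpow (le_of_lt (div_pos hC hden)) (Nat.cast_nonneg n)]
    calc (effectiveDim μ σ n : ℝ) ≤ (max 1 ⌈b⌉₊ : ℕ) := by exact_mod_cast hle
      _ ≤ ((⌈b⌉₊ : ℕ) : ℝ) + 1 := by
          have : (max 1 ⌈b⌉₊ : ℕ) ≤ ⌈b⌉₊ + 1 := by omega
          exact_mod_cast this
      _ ≤ (b + 1) + 1 := by
          have := Nat.ceil_lt_add_one hb0
          linarith
      _ = c0 * (n:ℝ) ^ (1/ω) + 2 := by rw [hbsplit]; ring
      _ ≤ c0 * (n:ℝ) ^ (1/ω) + 2 * ((n:ℝ) ^ (1/ω)) := by linarith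
      _ = (2 + c0) * (n:ℝ) ^ (1/ω) := by ring
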